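/- arXiv:1708.07308 — 4 statements merged into one kernel-verified Lean document; each statement's English description precedes it below -/
import Mathlib

section
/- Let T ≥ 1, σ > 0, β* > 0, and let (c_t)_{t=1}^T, (r_t)_{t=1}^T, (β_t)_{t=1}^T, (s_t)_{t=1}^T be real sequences with c_t > 0, r_t ≥ 0, 0 < β_t ≤ β*, and 0 ≤ s_t ≤ 1 for all t. If r_t ≤ 2 √(β_t / c_t) · s_t for every t, then ∑_{t=1}^{T} c_t r_t² ≤ (4 β* / log(1 + σ^{-2})) · ∑_{t=1}^{T} log(1 + σ^{-2} s_t²). -/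
open Real Finset

lemma log_concave_key (a u : ℝ) (ha : 0 < a) (hu : 0 ≤ u) (hua : u ≤ a) :
    u * Real.log (1 + a) ≤ a * Real.log (1 + u) := by
  rcases eq_or_lt_of_le hu with h | hu'
  · simp [← h]
  have ht : u / a ≤ 1 := (div_le_one ha).2 hua
  have ht0 : 0 ≤ u / a := div_nonneg hu ha.le
  have hconc := strictConcaveOn_log_Ioi.concaveOn.2
    (x := 1 + a) (y := 1)
    (by simp; linarith : (1 + a) ∈ Set.Ioi (0:ℝ))
    (by simp : (1:ℝ) ∈ Set.Ioi (0:ℝ))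
    ht0 (by linarith : (0:ℝ) ≤ 1 - u / a) (by ring)
  have hx : (u / a) • (1 + a) + (1 - u / a) • (1:ℝ) = 1 + u := by
    field_simp
    simp only [smul_eq_mul]; rw [div_mul_eq_mul_div, div_mul_eq_mul_div, ← add_div, div_eq_iff ha.ne']; ring
  rw [hx, Real.log_one] at hconc
  simp only [smul_eq_mul] at hconc
  have : u / a * Real.log (1 + a) ≤ Real.log (1 + u) := by linarith
  calc u * Real.log (1 + a) = a * (u / a * Real.log (1 + a)) := by
        field_simp
    _ ≤ a * Real.log (1 + u) := by
        exact mul_le_mul_of_nonneg_left this ha.le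

theorem weighted_squared_regret_bound (T : ℕ) (hT : 1 ≤ T) (σ βstar : ℝ)
    (hσ : 0 < σ) (hβstar : 0 < βstar)
    (c r β s : ℕ → ℝ)
    (hc : ∀ t ∈ Finset.Icc 1 T, 0 < c t)
    (hr : ∀ t ∈ Finset.Icc 1 T, 0 ≤ r t)
    (hβ : ∀ t ∈ Finset.Icc 1 T, 0 < β t ∧ β t ≤ βstar)
    (hs : ∀ t ∈ Finset.Icc 1 T, 0 ≤ s t ∧ s t ≤ 1)
    (hrb : ∀ t ∈ Finset.Icc 1 T, r t ≤ 2 * Real.sqrt (β t / c t) * s t) :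
    ∑ t ∈ Finset.Icc 1 T, c t * (r t) ^ 2 ≤
      (4 * βstar / Real.log (1 + (σ ^ 2)⁻¹)) *
        ∑ t ∈ Finset.Icc 1 T, Real.log (1 + (σ ^ 2)⁻¹ * (s t) ^ 2) := by
  set a := (σ ^ 2)⁻¹ with ha_def
  have ha : 0 < a := by positivity
  have hla : 0 < Real.log (1 + a) := Real.log_pos (by linarith)
  rw [Finset.mul_sum]
  apply Finset.sum_le_sum
  intro t ht
  obtain ⟨hs0, hs1⟩ := hs t ht
  obtain ⟨hβ0, hβb⟩ := hβ t ht
  have hct := hc t ht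
  -- step 1: c t * r t ^ 2 ≤ 4 * β t * s t ^ 2
  have h1 : c t * r t ^ 2 ≤ 4 * β t * s t ^ 2 := by
    have hrt := hrb t ht
    have h2 : r t ^ 2 ≤ (2 * Real.sqrt (β t / c t) * s t) ^ 2 := by
      apply pow_le_pow_left₀ (hr t ht) hrt
    have h3 : (2 * Real.sqrt (β t / c t) * s t) ^ 2 = 4 * (β t / c t) * s t ^ 2 := by
      rw [mul_pow, mul_pow, Real.sq_sqrt (by positivity)]
      ring
    calc c t * r t ^ 2 ≤ c t * (4 * (β t / c t) * s t ^ 2) := by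
          rw [← h3]; exact mul_le_mul_of_nonneg_left h2 hct.le
      _ = 4 * β t * s t ^ 2 := by field_simp
  have h4 : 4 * β t * s t ^ 2 ≤ 4 * βstar * s t ^ 2 := by nlinarith
  -- step 2: s t ^ 2 ≤ log(1 + a * s t ^ 2) / log (1 + a)
  have hu0 : 0 ≤ a * s t ^ 2 := by positivity
  have hsq : s t ^ 2 ≤ 1 := by nlinarith
  have hua : a * s t ^ 2 ≤ a := by nlinarith
  have hkey := log_concave_key a (a * s t ^ 2) ha hu0 hua
  -- a * s t ^ 2 * log (1 + a) ≤ a * log (1 + a * s t ^ 2)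
  have h5 : s t ^ 2 * Real.log (1 + a) ≤ Real.log (1 + a * s t ^ 2) := by
    have := (mul_le_mul_iff_right₀ ha).mp (by linarith [hkey] : a * (s t ^ 2 * Real.log (1 + a)) ≤ a * Real.log (1 + a * s t ^ 2))
    exact this
  calc c t * r t ^ 2 ≤ 4 * βstar * s t ^ 2 := le_trans h1 h4
    _ ≤ 4 * βstar * (Real.log (1 + a * s t ^ 2) / Real.log (1 + a)) := by
        apply mul_le_mul_of_nonneg_left _ (by positivity)
        rw [le_div_iff₀ hla]
        exact h5
    _ = 4 * βstar / Real.log (1 + a) * Real.log (1 + a * s t ^ 2) := by ring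
end

section
/- Let T ≥ 1, K ≥ 1, σ > 0, c* > 0, let f : {1,…,K} → ℝ, let c : {1,…,K} → ℝ with 0 < c_k ≤ c* for all k, and let (β_t)_{t=1}^T be a nondecreasing sequence of positive reals. For each round t let μ_{t-1}, s_{t-1} : {1,…,K} → ℝ with 0 ≤ s_{t-1}(k) ≤ 1 for all k, assume the confidence bounds |f(k) − μ_{t-1}(k)| ≤ √(β_t/c_k) · s_{t-1}(k) hold for all t ∈ {1,…,T} and all k, and let a_t be an arm maximizing k ↦ μ_{t-1}(k) + √(β_t/c_k) · s_{t-1}(k). Let a* be an arm maximizing f. Then the cost-weighted cumulative regret satisfies ∑_{t=1}^{T} c_{a_t} (f(a*) − f(a_t)) ≤ √(T · I(T)), where I(T) = (4 c* β_T / log(1 + σ^{-2})) · ∑_{t=1}^{T} log(1 + σ^{-2} s_{t-1}(a_t)²). -/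
open Real Finset

lemma log_concave_aux (A x : ℝ) (hA : 0 < A) (hx0 : 0 ≤ x) (hx1 : x ≤ 1) :
    x * Real.log (1 + A) ≤ Real.log (1 + A * x) := by
  have hcc : ConcaveOn ℝ (Set.Ioi 0) Real.log := strictConcaveOn_log_Ioi.concaveOn
  have h := hcc.2 (Set.mem_Ioi.2 one_pos) (Set.mem_Ioi.2 (by linarith : (0:ℝ) < 1 + A))
    (by linarith : (0:ℝ) ≤ 1 - x) hx0 (by ring)
  simp only [smul_eq_mul, Real.log_one, mul_zero, zero_add] at h
  calc x * Real.log (1 + A) ≤ Real.log ((1 - x) * 1 + x * (1 + A)) := by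
        convert h using 2 <;> ring
    _ = Real.log (1 + A * x) := by ring_nf

theorem cost_aware_gpucb_cumulative_regret (T K : ℕ) (hT : 1 ≤ T) (hK : 1 ≤ K)
    (σ cstar : ℝ) (hσ : 0 < σ) (hcstar : 0 < cstar)
    (f c : Fin K → ℝ) (hc : ∀ k, 0 < c k ∧ c k ≤ cstar)
    (β : ℕ → ℝ) (hβpos : ∀ t ∈ Finset.Icc 1 T, 0 < β t) (hβmono : Monotone β)
    (μ s : ℕ → Fin K → ℝ)
    (hs : ∀ t ∈ Finset.Icc 1 T, ∀ k, 0 ≤ s t k ∧ s t k ≤ 1)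
    (hconf : ∀ t ∈ Finset.Icc 1 T, ∀ k,
      |f k - μ t k| ≤ Real.sqrt (β t / c k) * s t k)
    (a : ℕ → Fin K)
    (ha : ∀ t ∈ Finset.Icc 1 T, ∀ k,
      μ t k + Real.sqrt (β t / c k) * s t k ≤
        μ t (a t) + Real.sqrt (β t / c (a t)) * s t (a t))
    (astar : Fin K) (hastar : ∀ k, f k ≤ f astar) :
    ∑ t ∈ Finset.Icc 1 T, c (a t) * (f astar - f (a t)) ≤
      Real.sqrt (T * ((4 * cstar * β T / Real.log (1 + (σ ^ 2)⁻¹)) *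
        ∑ t ∈ Finset.Icc 1 T, Real.log (1 + (σ ^ 2)⁻¹ * (s t (a t)) ^ 2))) := by
  have hTmem : T ∈ Finset.Icc 1 T := by simp [hT]
  have hβT : 0 < β T := hβpos T hTmem
  have hA : 0 < (σ ^ 2)⁻¹ := by positivity
  have hL : 0 < Real.log (1 + (σ ^ 2)⁻¹) := Real.log_pos (by linarith)
  set L := Real.log (1 + (σ ^ 2)⁻¹) with hLdef
  set g : ℕ → ℝ := fun t => c (a t) * (f astar - f (a t)) with hgdef
  -- per round bound
  have key : ∀ t ∈ Finset.Icc 1 T, g t ≤ 2 * Real.sqrt (cstar * β T) * s t (a t) := by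
    intro t ht
    have hck := hc (a t)
    have hcs := hc astar
    have hβt : 0 < β t := hβpos t ht
    have h1 := hconf t ht astar
    have h2 := hconf t ht (a t)
    have h3 := ha t ht astar
    have habs1 : f astar - μ t astar ≤ Real.sqrt (β t / c astar) * s t astar :=
      (abs_le.mp h1).2
    have habs2 : μ t (a t) - f (a t) ≤ Real.sqrt (β t / c (a t)) * s t (a t) := by
      have := (abs_le.mp h2).1
      linarith
    have hr : f astar - f (a t) ≤ 2 * (Real.sqrt (β t / c (a t)) * s t (a t)) := by
      have := (abs_le.mp h2).1
      linarith
    have hsnn : 0 ≤ s t (a t) := (hs t ht (a t)).1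
    have hsq : c (a t) * Real.sqrt (β t / c (a t)) = Real.sqrt (c (a t) * β t) := by
      have hcne : c (a t) ≠ 0 := hck.1.ne'
      have hrw : β t / c (a t) = c (a t) * β t / c (a t) ^ 2 := by
        field_simp
      rw [hrw, Real.sqrt_div (mul_nonneg hck.1.le hβt.le), Real.sqrt_sq hck.1.le,
        mul_div_assoc', mul_div_cancel_left₀ _ hcne]
    have hmono : Real.sqrt (c (a t) * β t) ≤ Real.sqrt (cstar * β T) := by
      apply Real.sqrt_le_sqrt
      have : β t ≤ β T := hβmono (Finset.mem_Icc.mp ht).2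
      nlinarith [hck.1, hck.2]
    calc g t ≤ c (a t) * (2 * (Real.sqrt (β t / c (a t)) * s t (a t))) := by
          exact mul_le_mul_of_nonneg_left hr hck.1.le
      _ = 2 * (c (a t) * Real.sqrt (β t / c (a t))) * s t (a t) := by ring
      _ = 2 * Real.sqrt (c (a t) * β t) * s t (a t) := by rw [hsq]
      _ ≤ 2 * Real.sqrt (cstar * β T) * s t (a t) := by
          apply mul_le_mul_of_nonneg_right _ hsnn
          linarith
  have hg_nonneg : ∀ t ∈ Finset.Icc 1 T, 0 ≤ g t := by
    intro t ht
    exact mul_nonneg (hc (a t)).1.le (by linarith [hastar (a t)])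
  -- squared bound per round
  have key2 : ∀ t ∈ Finset.Icc 1 T,
      g t ^ 2 ≤ (4 * cstar * β T / L) * Real.log (1 + (σ ^ 2)⁻¹ * (s t (a t)) ^ 2) := by
    intro t ht
    have hsnn := (hs t ht (a t)).1
    have hs1 := (hs t ht (a t)).2
    have h1 : g t ^ 2 ≤ (2 * Real.sqrt (cstar * β T) * s t (a t)) ^ 2 := by
      apply sq_le_sq' _ (key t ht)
      have := hg_nonneg t ht
      have : 0 ≤ 2 * Real.sqrt (cstar * β T) * s t (a t) := by positivity
      linarith [hg_nonneg t ht]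
    have hsq : (2 * Real.sqrt (cstar * β T) * s t (a t)) ^ 2
        = 4 * cstar * β T * (s t (a t)) ^ 2 := by
      rw [mul_pow, mul_pow, Real.sq_sqrt (by positivity)]
      ring
    have hconc : (s t (a t)) ^ 2 * L ≤ Real.log (1 + (σ ^ 2)⁻¹ * (s t (a t)) ^ 2) :=
      log_concave_aux _ _ hA (by positivity) (by nlinarith)
    have : 4 * cstar * β T * (s t (a t)) ^ 2 ≤
        (4 * cstar * β T / L) * Real.log (1 + (σ ^ 2)⁻¹ * (s t (a t)) ^ 2) := by
      rw [div_mul_eq_mul_div, le_div_iff₀ hL]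
      have h4 : (0:ℝ) ≤ 4 * cstar * β T := by positivity
      calc 4 * cstar * β T * s t (a t) ^ 2 * L
          = (4 * cstar * β T) * (s t (a t) ^ 2 * L) := by ring
        _ ≤ _ := mul_le_mul_of_nonneg_left hconc h4
    linarith [h1, hsq.le.trans this]
  -- Cauchy–Schwarz
  have hsum_nonneg : 0 ≤ ∑ t ∈ Finset.Icc 1 T, g t := Finset.sum_nonneg hg_nonneg
  have hcs : (∑ t ∈ Finset.Icc 1 T, g t) ^ 2 ≤
      (T : ℝ) * ∑ t ∈ Finset.Icc 1 T, g t ^ 2 := by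
    have := sq_sum_le_card_mul_sum_sq (s := Finset.Icc 1 T) (f := g)
    simpa [Nat.Icc_eq_range', Nat.card_Icc] using this
  have hsum2 : ∑ t ∈ Finset.Icc 1 T, g t ^ 2 ≤
      (4 * cstar * β T / L) * ∑ t ∈ Finset.Icc 1 T, Real.log (1 + (σ ^ 2)⁻¹ * (s t (a t)) ^ 2) := by
    rw [Finset.mul_sum]
    exact Finset.sum_le_sum key2
  calc ∑ t ∈ Finset.Icc 1 T, g t = Real.sqrt ((∑ t ∈ Finset.Icc 1 T, g t) ^ 2) :=
        (Real.sqrt_sq hsum_nonneg).symm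
    _ ≤ Real.sqrt (T * ((4 * cstar * β T / L) *
        ∑ t ∈ Finset.Icc 1 T, Real.log (1 + (σ ^ 2)⁻¹ * (s t (a t)) ^ 2))) := by
        apply Real.sqrt_le_sqrt
        calc (∑ t ∈ Finset.Icc 1 T, g t) ^ 2 ≤ (T : ℝ) * ∑ t ∈ Finset.Icc 1 T, g t ^ 2 := hcs
          _ ≤ _ := by
            apply mul_le_mul_of_nonneg_left hsum2 (by positivity)
end

section
/- Let T ≥ 1, K ≥ 1, σ > 0, let f : {1,…,K} → ℝ, let c : {1,…,K} → ℝ with c_k > 0 for all k, and let (β_t)_{t=1}^T be a nondecreasing sequence of positive reals. For each round t let μ_{t-1}, s_{t-1} : {1,…,K} → ℝ with 0 ≤ s_{t-1}(k) ≤ 1 for all k, assume the confidence bounds |f(k) − μ_{t-1}(k)| ≤ √(β_t/c_k) · s_{t-1}(k) hold for all t ∈ {1,…,T} and all k, and let a_t be an arm maximizing k ↦ μ_{t-1}(k) + √(β_t/c_k) · s_{t-1}(k). Let a* be an arm maximizing f. Then min_{1 ≤ t ≤ T} (f(a*) − f(a_t)) ≤ √( Ĩ(T) / ∑_{t=1}^{T}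 c_{a_t} ), where Ĩ(T) = (4 β_T / log(1 + σ^{-2})) · ∑_{t=1}^{T} log(1 + σ^{-2} s_{t-1}(a_t)²). -/
open Real Finset

theorem cost_aware_gpucb_min_regret (T K : ℕ) (hT : 1 ≤ T) (hK : 1 ≤ K)
    (σ : ℝ) (hσ : 0 < σ)
    (f c : Fin K → ℝ) (hc : ∀ k, 0 < c k)
    (β : ℕ → ℝ) (hβpos : ∀ t ∈ Finset.Icc 1 T, 0 < β t) (hβmono : Monotone β)
    (μ s : ℕ → Fin K → ℝ)
    (hs : ∀ t ∈ Finset.Icc 1 T, ∀ k, 0 ≤ s t k ∧ s t k ≤ 1)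
    (hconf : ∀ t ∈ Finset.Icc 1 T, ∀ k,
      |f k - μ t k| ≤ Real.sqrt (β t / c k) * s t k)
    (a : ℕ → Fin K)
    (ha : ∀ t ∈ Finset.Icc 1 T, ∀ k,
      μ t k + Real.sqrt (β t / c k) * s t k ≤
        μ t (a t) + Real.sqrt (β t / c (a t)) * s t (a t))
    (astar : Fin K) (hastar : ∀ k, f k ≤ f astar) :
    (Finset.Icc 1 T).inf' (Finset.nonempty_Icc.mpr hT) (fun t => f astar - f (a t)) ≤
      Real.sqrt (((4 * β T / Real.log (1 + (σ ^ 2)⁻¹)) *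
          ∑ t ∈ Finset.Icc 1 T, Real.log (1 + (σ ^ 2)⁻¹ * (s t (a t)) ^ 2)) /
        ∑ t ∈ Finset.Icc 1 T, c (a t)) := by
  set b : ℝ := (σ ^ 2)⁻¹ with hb
  have hbpos : 0 < b := by positivity
  have hL : 0 < Real.log (1 + b) := Real.log_pos (by linarith)
  have hTmem : T ∈ Finset.Icc 1 T := by simp [hT]
  have hβT : 0 < β T := hβpos T hTmem
  have hne : (Finset.Icc 1 T).Nonempty := Finset.nonempty_Icc.mpr hT
  -- positivity of total cost
  have hS : 0 < ∑ t ∈ Finset.Icc 1 T, c (a t) :=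
    Finset.sum_pos (fun t _ => hc (a t)) hne
  -- nonnegativity of the information term
  have hlog_nonneg : ∀ t ∈ Finset.Icc 1 T, 0 ≤ Real.log (1 + b * (s t (a t)) ^ 2) := by
    intro t ht
    apply Real.log_nonneg
    nlinarith [sq_nonneg (s t (a t)), hbpos]
  have hI : 0 ≤ (4 * β T / Real.log (1 + b)) *
      ∑ t ∈ Finset.Icc 1 T, Real.log (1 + b * (s t (a t)) ^ 2) := by
    apply mul_nonneg (by positivity)
    exact Finset.sum_nonneg hlog_nonneg
  set r := (Finset.Icc 1 T).inf' hne (fun t => f astar - f (a t)) with hr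
  rcases le_or_gt r 0 with h0 | h0
  · exact h0.trans (Real.sqrt_nonneg _)
  -- per-round regret bound
  have hreg : ∀ t ∈ Finset.Icc 1 T,
      f astar - f (a t) ≤ 2 * Real.sqrt (β t / c (a t)) * s t (a t) := by
    intro t ht
    have h1 := (abs_le.mp (hconf t ht astar)).2
    have h2 := (abs_le.mp (hconf t ht (a t))).1
    have h3 := ha t ht astar
    have h2' := (abs_le.mp (hconf t ht (a t))).2
    linarith
  -- per-round squared bound
  have hterm : ∀ t ∈ Finset.Icc 1 T,
      c (a t) * r ^ 2 ≤ (4 * β T / Real.log (1 + b)) * Real.log (1 + b * (s t (a t)) ^ 2) := by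
    intro t ht
    have hβt : 0 < β t := hβpos t ht
    have hca : 0 < c (a t) := hc (a t)
    have hst := hs t ht (a t)
    have hsq : Real.sqrt (β t / c (a t)) ^ 2 = β t / c (a t) :=
      Real.sq_sqrt (by positivity)
    have hrle : r ≤ 2 * Real.sqrt (β t / c (a t)) * s t (a t) :=
      (Finset.inf'_le _ ht).trans (hreg t ht)
    have hrsq : r ^ 2 ≤ (2 * Real.sqrt (β t / c (a t)) * s t (a t)) ^ 2 := by
      exact pow_le_pow_left₀ h0.le hrle 2
    have hexp : (2 * Real.sqrt (β t / c (a t)) * s t (a t)) ^ 2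
        = 4 * (β t / c (a t)) * (s t (a t)) ^ 2 := by
      rw [mul_pow, mul_pow, hsq]; ring
    have h4 : c (a t) * r ^ 2 ≤ 4 * β t * (s t (a t)) ^ 2 := by
      have := mul_le_mul_of_nonneg_left hrsq hca.le
      rw [hexp] at this
      calc c (a t) * r ^ 2 ≤ c (a t) * (4 * (β t / c (a t)) * (s t (a t)) ^ 2) := this
        _ = 4 * β t * (s t (a t)) ^ 2 := by field_simp
    have h5 : 4 * β t * (s t (a t)) ^ 2 ≤ 4 * β T * (s t (a t)) ^ 2 := by
      have : β t ≤ β T := hβmono (Finset.mem_Icc.mp ht).2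
      nlinarith [sq_nonneg (s t (a t))]
    -- Bernoulli-based information bound: x * log(1+b) ≤ log(1+b*x) for x ∈ [0,1]
    have hx0 : 0 ≤ (s t (a t)) ^ 2 := sq_nonneg _
    have hx1 : (s t (a t)) ^ 2 ≤ 1 := by nlinarith [hst.1, hst.2]
    have hbern : (1 + b) ^ ((s t (a t)) ^ 2 : ℝ) ≤ 1 + (s t (a t)) ^ 2 * b :=
      rpow_one_add_le_one_add_mul_self (by linarith) hx0 hx1
    have h6 : (s t (a t)) ^ 2 * Real.log (1 + b) ≤ Real.log (1 + b * (s t (a t)) ^ 2) := by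
      have hpos1 : (0:ℝ) < 1 + b := by linarith
      have := Real.log_le_log (by positivity : (0:ℝ) < (1 + b) ^ ((s t (a t)) ^ 2 : ℝ)) hbern
      rw [Real.log_rpow hpos1] at this
      rw [mul_comm b]
      exact this
    have h7 : 4 * β T * (s t (a t)) ^ 2 ≤
        (4 * β T / Real.log (1 + b)) * Real.log (1 + b * (s t (a t)) ^ 2) := by
      rw [div_mul_eq_mul_div, le_div_iff₀ hL]
      nlinarith [hβT]
    linarith
  -- sum up
  have hsum : r ^ 2 * ∑ t ∈ Finset.Icc 1 T, c (a t) ≤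
      (4 * β T / Real.log (1 + b)) *
        ∑ t ∈ Finset.Icc 1 T, Real.log (1 + b * (s t (a t)) ^ 2) := by
    rw [Finset.mul_sum, Finset.mul_sum]
    refine Finset.sum_le_sum (fun t ht => ?_)
    rw [mul_comm]
    exact hterm t ht
  have hr2 : r ^ 2 ≤ ((4 * β T / Real.log (1 + b)) *
        ∑ t ∈ Finset.Icc 1 T, Real.log (1 + b * (s t (a t)) ^ 2)) /
      ∑ t ∈ Finset.Icc 1 T, c (a t) := (le_div_iff₀ hS).mpr hsum
  calc r = Real.sqrt (r ^ 2) := (Real.sqrt_sq h0.le).symm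
    _ ≤ _ := Real.sqrt_le_sqrt hr2
end

section
/- Let n ≥ 1, T ≥ 1 be natural numbers and let c* > 0, β* > 0, σ* > 0 be real constants. For each round t ∈ {1,…,T} let c_t ∈ (0, c*], β_t ∈ (0, β*], s_t ∈ [0,1], and let ρ_1(t), …, ρ_n(t) be nonnegative reals satisfying ∑_{i=1}^{n} ρ_i(t) ≤ n · 2 √(β_t / c_t) · s_t. Let T(1), …, T(n) be pairwise disjoint subsets of {1,…,T} with union {1,…,T}, and for each i let σ^i ∈ (0, σ*]. Then ∑_{t=1}^{T} c_t ∑_{i=1}^{n} ρ_i(t) ≤ n √T · √( ∑_{i=1}^{n} I_i ), where I_i = (4 c* β* / log(1 + (σ*)^{-2})) · ∑_{t ∈ T(i)} log(1 + (σ^i)^{-2} s_t²). -/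
open Real Finset

theorem greedy_multitenant_regret (n T : ℕ) (hn : 1 ≤ n) (hT : 1 ≤ T)
    (cstar βstar σstar : ℝ)
    (hcstar : 0 < cstar) (hβstar : 0 < βstar) (hσstar : 0 < σstar)
    (c β s : ℕ → ℝ)
    (hc : ∀ t ∈ Finset.Icc 1 T, 0 < c t ∧ c t ≤ cstar)
    (hβ : ∀ t ∈ Finset.Icc 1 T, 0 < β t ∧ β t ≤ βstar)
    (hs : ∀ t ∈ Finset.Icc 1 T, 0 ≤ s t ∧ s t ≤ 1)
    (ρ : Fin n → ℕ → ℝ)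
    (hρ : ∀ i, ∀ t ∈ Finset.Icc 1 T, 0 ≤ ρ i t)
    (hsum : ∀ t ∈ Finset.Icc 1 T,
      ∑ i, ρ i t ≤ n * (2 * Real.sqrt (β t / c t)) * s t)
    (Ts : Fin n → Finset ℕ)
    (hsub : ∀ i, Ts i ⊆ Finset.Icc 1 T)
    (hdisj : ∀ i j, i ≠ j → Disjoint (Ts i) (Ts j))
    (hunion : Finset.univ.biUnion Ts = Finset.Icc 1 T)
    (σi : Fin n → ℝ) (hσi : ∀ i, 0 < σi i ∧ σi i ≤ σstar) :
    ∑ t ∈ Finset.Icc 1 T, c t * ∑ i, ρ i t ≤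
      n * Real.sqrt T * Real.sqrt (∑ i,
        (4 * cstar * βstar / Real.log (1 + (σstar ^ 2)⁻¹)) *
          ∑ t ∈ Ts i, Real.log (1 + ((σi i) ^ 2)⁻¹ * (s t) ^ 2)) := by
  set L := Real.log (1 + (σstar ^ 2)⁻¹) with hLdef
  have hσsq : (0:ℝ) < (σstar ^ 2)⁻¹ := by positivity
  have hL : 0 < L := Real.log_pos (by linarith)
  set S := ∑ i, ∑ t ∈ Ts i, Real.log (1 + ((σi i) ^ 2)⁻¹ * (s t) ^ 2) with hSdef
  set Q := ∑ t ∈ Finset.Icc 1 T, (s t) ^ 2 with hQdef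
  have hQ0 : 0 ≤ Q := Finset.sum_nonneg fun t _ => sq_nonneg _
  -- key pointwise lemma: s t ^ 2 * L ≤ log (1 + σi⁻² s²)
  have key : ∀ i : Fin n, ∀ t ∈ Ts i,
      (s t) ^ 2 * L ≤ Real.log (1 + ((σi i) ^ 2)⁻¹ * (s t) ^ 2) := by
    intro i t ht
    obtain ⟨hs0, hs1⟩ := hs t (hsub i ht)
    obtain ⟨hσ0, hσle⟩ := hσi i
    have hMi : (0:ℝ) < ((σi i) ^ 2)⁻¹ := by positivity
    have hss : (0:ℝ) ≤ (s t) ^ 2 := sq_nonneg _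
    have hss1 : (s t) ^ 2 ≤ 1 := by nlinarith
    -- concavity of log
    have hconc := (strictConcaveOn_log_Ioi.concaveOn).2
      (Set.mem_Ioi.mpr (by norm_num : (0:ℝ) < 1))
      (Set.mem_Ioi.mpr (by linarith : (0:ℝ) < 1 + ((σi i) ^ 2)⁻¹))
      (by linarith : (0:ℝ) ≤ 1 - (s t) ^ 2) hss (by ring)
    simp only [smul_eq_mul, Real.log_one, mul_zero, zero_add, mul_one] at hconc
    have h1 : 1 - (s t)^2 + (s t)^2 * (1 + ((σi i) ^ 2)⁻¹)
        = 1 + ((σi i) ^ 2)⁻¹ * (s t) ^ 2 := by ring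
    rw [h1] at hconc
    have hmono : L ≤ Real.log (1 + ((σi i) ^ 2)⁻¹) := by
      apply Real.log_le_log (by linarith)
      have : (σstar ^ 2)⁻¹ ≤ ((σi i) ^ 2)⁻¹ := by
        apply inv_anti₀ (by positivity)
        nlinarith
      linarith
    calc (s t) ^ 2 * L ≤ (s t) ^ 2 * Real.log (1 + ((σi i) ^ 2)⁻¹) := by
          exact mul_le_mul_of_nonneg_left hmono hss
      _ ≤ _ := hconc
  -- L * Q ≤ S
  have hLQ : L * Q ≤ S := by
    have hrw : Q = ∑ i, ∑ t ∈ Ts i, (s t) ^ 2 := by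
      rw [hQdef, ← hunion]
      exact Finset.sum_biUnion fun i _ j _ hij => hdisj i j hij
    rw [hrw, hSdef, Finset.mul_sum]
    apply Finset.sum_le_sum
    intro i _
    rw [Finset.mul_sum]
    exact Finset.sum_le_sum fun t ht => by
      have := key i t ht; linarith [this]
  have hS0 : 0 ≤ S := by
    have : 0 ≤ L * Q := mul_nonneg hL.le hQ0
    linarith
  -- Step A: pointwise bound on summands
  have stepA : ∀ t ∈ Finset.Icc 1 T,
      c t * ∑ i, ρ i t ≤ (n : ℝ) * (2 * Real.sqrt (cstar * βstar)) * s t := by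
    intro t ht
    obtain ⟨hc0, hcle⟩ := hc t ht
    obtain ⟨hb0, hble⟩ := hβ t ht
    obtain ⟨hs0, hs1⟩ := hs t ht
    have h1 : c t * ∑ i, ρ i t ≤ c t * ((n : ℝ) * (2 * Real.sqrt (β t / c t)) * s t) :=
      mul_le_mul_of_nonneg_left (hsum t ht) hc0.le
    have h2 : c t * Real.sqrt (β t / c t) = Real.sqrt (c t * β t) := by
      rw [← Real.sqrt_sq hc0.le, ← Real.sqrt_mul (sq_nonneg _)]
      congr 1
      field_simp
      rw [Real.sq_sqrt (sq_nonneg _)]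
    have h3 : Real.sqrt (c t * β t) ≤ Real.sqrt (cstar * βstar) :=
      Real.sqrt_le_sqrt (by nlinarith)
    calc c t * ∑ i, ρ i t ≤ c t * ((n : ℝ) * (2 * Real.sqrt (β t / c t)) * s t) := h1
      _ = (n : ℝ) * 2 * s t * (c t * Real.sqrt (β t / c t)) := by ring
      _ = (n : ℝ) * 2 * s t * Real.sqrt (c t * β t) := by rw [h2]
      _ ≤ (n : ℝ) * 2 * s t * Real.sqrt (cstar * βstar) := by
          apply mul_le_mul_of_nonneg_left h3
          positivity
      _ = (n : ℝ) * (2 * Real.sqrt (cstar * βstar)) * s t := by ring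
  -- Step B: Cauchy-Schwarz
  have stepB : ∑ t ∈ Finset.Icc 1 T, s t ≤ Real.sqrt T * Real.sqrt Q := by
    have hsum0 : 0 ≤ ∑ t ∈ Finset.Icc 1 T, s t :=
      Finset.sum_nonneg fun t ht => (hs t ht).1
    have hcs : (∑ t ∈ Finset.Icc 1 T, s t) ^ 2 ≤ (T : ℝ) * Q := by
      have := Finset.sum_mul_sq_le_sq_mul_sq (Finset.Icc 1 T) (fun _ => (1:ℝ)) s
      simp only [one_mul, one_pow, Finset.sum_const, nsmul_eq_mul, mul_one] at this
      rw [Nat.card_Icc] at this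
      simpa using this
    calc ∑ t ∈ Finset.Icc 1 T, s t = Real.sqrt ((∑ t ∈ Finset.Icc 1 T, s t) ^ 2) :=
          (Real.sqrt_sq hsum0).symm
      _ ≤ Real.sqrt ((T : ℝ) * Q) := Real.sqrt_le_sqrt hcs
      _ = Real.sqrt T * Real.sqrt Q := Real.sqrt_mul (Nat.cast_nonneg T) Q
  -- Final combination
  have hRHSarg : ∑ i, (4 * cstar * βstar / L) *
      ∑ t ∈ Ts i, Real.log (1 + ((σi i) ^ 2)⁻¹ * (s t) ^ 2)
      = (4 * cstar * βstar / L) * S := by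
    rw [hSdef, Finset.mul_sum]
  rw [hRHSarg]
  have hfinal : 2 * Real.sqrt (cstar * βstar) * Real.sqrt Q
      ≤ Real.sqrt ((4 * cstar * βstar / L) * S) := by
    have h4 : Real.sqrt 4 = 2 := by
      rw [show (4:ℝ) = 2 ^ 2 by norm_num]; exact Real.sqrt_sq (by norm_num)
    have heq : Real.sqrt (4 * (cstar * βstar) * Q)
        = 2 * Real.sqrt (cstar * βstar) * Real.sqrt Q := by
      rw [Real.sqrt_mul (by positivity), Real.sqrt_mul (by norm_num : (0:ℝ) ≤ 4), h4]
    rw [← heq]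
    apply Real.sqrt_le_sqrt
    rw [div_mul_eq_mul_div, le_div_iff₀ hL]
    nlinarith [mul_le_mul_of_nonneg_left hLQ (show (0:ℝ) ≤ 4 * cstar * βstar by positivity)]
  calc ∑ t ∈ Finset.Icc 1 T, c t * ∑ i, ρ i t
      ≤ ∑ t ∈ Finset.Icc 1 T, (n : ℝ) * (2 * Real.sqrt (cstar * βstar)) * s t :=
        Finset.sum_le_sum stepA
    _ = (n : ℝ) * (2 * Real.sqrt (cstar * βstar)) * ∑ t ∈ Finset.Icc 1 T, s t := by
        rw [Finset.mul_sum]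
    _ ≤ (n : ℝ) * (2 * Real.sqrt (cstar * βstar)) * (Real.sqrt T * Real.sqrt Q) := by
        apply mul_le_mul_of_nonneg_left stepB
        positivity
    _ = (n : ℝ) * Real.sqrt T * (2 * Real.sqrt (cstar * βstar) * Real.sqrt Q) := by ring
    _ ≤ (n : ℝ) * Real.sqrt T * Real.sqrt ((4 * cstar * βstar / L) * S) := by
        apply mul_le_mul_of_nonneg_left hfinal
        positivity
end
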